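/- Let (R, 𝔪) be a Noetherian local ring. Every ideal I ⊆ R admits a minimal reduction, and any minimal reduction J of I is basic, i.e., J has no reduction other than itself. -/

import Mathlib

/-- `J` is a reduction of `I`: `J ⊆ I` and `I^(n+1) = J·I^n` for some `n ≥ 0`. -/
def IsReduction {R : Type*} [CommRing R] (J I : Ideal R) : Prop :=
  J ≤ I ∧ ∃ n : ℕ, I ^ (n + 1) = J * I ^ n

/-- `J` is a minimal reduction of `I`: a reduction of `I` such that no ideal strictly
contained in `J` is a reduction of `I`. -/
def IsMinimalReduction {R : Type*} [CommRing R] (J I : Ideal R) : Prop :=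
  IsReduction J I ∧ ∀ J' : Ideal R, J' < J → ¬ IsReduction J' I

/-- An ideal is basic if it has no reduction other than itself. -/
def Ideal.IsBasic {R : Type*} [CommRing R] (J : Ideal R) : Prop :=
  ∀ J' : Ideal R, IsReduction J' J → J' = J

section Aux
variable {R : Type*} [CommRing R]

lemma isReduction_self (I : Ideal R) : IsReduction I I :=
  ⟨le_rfl, 0, by simp⟩

lemma isReduction_pow_aux {K I : Ideal R} {n : ℕ}
    (h : I ^ (n + 1) = K * I ^ n) : ∀ m : ℕ, I ^ (n + m + 1) = K ^ (m + 1) * I ^ n := by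
  intro m
  induction m with
  | zero => simpa using h
  | succ m ih =>
    calc I ^ (n + (m + 1) + 1) = I ^ (n + m + 1) * I := by ring
      _ = K ^ (m + 1) * I ^ n * I := by rw [ih]
      _ = K ^ (m + 1) * I ^ (n + 1) := by ring
      _ = K ^ (m + 1) * (K * I ^ n) := by rw [h]
      _ = K ^ (m + 1 + 1) * I ^ n := by ring

lemma isReduction_trans {J' J I : Ideal R} (h1 : IsReduction J' J) (h2 : IsReduction J I) :
    IsReduction J' I := by
  obtain ⟨hJ'J, m, hm⟩ := h1
  obtain ⟨hJI, n, hn⟩ := h2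
  refine ⟨hJ'J.trans hJI, n + m, ?_⟩
  have key := isReduction_pow_aux hn m
  apply le_antisymm
  · rw [key, hm, mul_assoc]
    refine Ideal.mul_mono_right ?_
    calc J ^ m * I ^ n ≤ I ^ m * I ^ n := Ideal.mul_mono_left (pow_le_pow_left' hJI m)
      _ = I ^ (n + m) := by ring
  · calc J' * I ^ (n + m) ≤ I * I ^ (n + m) := Ideal.mul_mono_left (hJ'J.trans hJI)
      _ = I ^ (n + m + 1) := by ring

lemma isReduction_of_le_of_le {K L I : Ideal R} (hKL : K ≤ L) (hLI : L ≤ I)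
    (h : IsReduction K I) : IsReduction L I := by
  obtain ⟨_, n, hn⟩ := h
  refine ⟨hLI, n, le_antisymm ?_ ?_⟩
  · rw [hn]; exact Ideal.mul_mono_left hKL
  · calc L * I ^ n ≤ I * I ^ n := Ideal.mul_mono_left hLI
      _ = I ^ (n + 1) := (pow_succ' I n).symm

end Aux

section Local
variable {R : Type*} [CommRing R] [IsNoetherianRing R] [IsLocalRing R]
open IsLocalRing

/-- Nakayama: if `K ⊔ 𝔪I` is a reduction of `I` and `K ≤ I`, then `K` is a reduction. -/
lemma isReduction_of_sup_maximalIdeal_mul {K I : Ideal R} (hK : K ≤ I)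
    (h : IsReduction (K ⊔ maximalIdeal R * I) I) : IsReduction K I := by
  obtain ⟨-, n, hn⟩ := h
  refine ⟨hK, n, le_antisymm ?_ ?_⟩
  · have hdist : (K ⊔ maximalIdeal R * I) * I ^ n
        = K * I ^ n ⊔ maximalIdeal R * I ^ (n + 1) := by
      rw [Ideal.sup_mul, mul_assoc, ← pow_succ']
    rw [hdist] at hn
    have hfg : (I ^ (n + 1)).FG := IsNoetherian.noetherian _
    have hjac : maximalIdeal R ≤ Ideal.jacobson ⊥ := maximalIdeal_le_jacobson ⊥
    refine Submodule.le_of_le_smul_of_le_jacobson_bot hfg hjac ?_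
    rw [smul_eq_mul]
    exact hn.le
  · calc K * I ^ n ≤ I * I ^ n := Ideal.mul_mono_left hK
      _ = I ^ (n + 1) := (pow_succ' I n).symm

/-- DCC: any nonempty set of ideals in the interval `[𝔪I, I]` has a minimal element. -/
lemma exists_minimal_in_interval (I : Ideal R) (S : Set (Ideal R)) (hne : S.Nonempty)
    (hS : ∀ L ∈ S, maximalIdeal R * I ≤ L ∧ L ≤ I) :
    ∃ M ∈ S, ∀ L ∈ S, L ≤ M → L = M := by
  classical
  set m := maximalIdeal R with hm
  set N : Submodule R I := m • ⊤ with hN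
  haveI i2 : IsScalarTower R (R ⧸ m) (I ⧸ N) :=
    Module.IsTorsionBySet.isScalarTower (Module.isTorsionBySet_quotient_ideal_smul I m)
  haveI i3 : IsArtinianRing (R ⧸ m) := by
    letI : Field (R ⧸ m) := Ideal.Quotient.field m
    exact DivisionRing.instIsArtinianRing
  haveI i4 : Module.Finite (R ⧸ m) (I ⧸ N) :=
    Module.Finite.of_restrictScalars_finite R _ _
  haveI i5 : IsArtinian (R ⧸ m) (I ⧸ N) := isArtinian_of_fg_of_artinian'
  -- turn an `R`-submodule of `I ⧸ N` into an `R⧸m`-submodule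
  let liftk : Submodule R (I ⧸ N) → Submodule (R ⧸ m) (I ⧸ N) := fun p =>
    { carrier := p
      add_mem' := fun ha hb => p.add_mem ha hb
      zero_mem' := p.zero_mem
      smul_mem' := by
        intro c x hx
        obtain ⟨r, rfl⟩ := Ideal.Quotient.mk_surjective c
        have : (Ideal.Quotient.mk m r) • x = r • x := rfl
        rw [this]
        exact p.smul_mem r hx }
  -- the map from ideals to `R⧸m`-submodules of `I ⧸ N`
  let g : Ideal R → Submodule (R ⧸ m) (I ⧸ N) := fun K =>
    liftk (Submodule.map N.mkQ (Submodule.comap I.subtype K))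
  -- recover `K` from `g K` for `K ∈ S`
  have hrec : ∀ K ∈ S, Submodule.map I.subtype
      (Submodule.comap N.mkQ (Submodule.restrictScalars R (g K))) = K := by
    intro K hK
    have h1 : Submodule.restrictScalars R (g K)
        = Submodule.map N.mkQ (Submodule.comap I.subtype K) := rfl
    have hNle : N ≤ Submodule.comap I.subtype K := by
      rw [← Submodule.map_le_iff_le_comap, hN, Submodule.map_smul'']
      rw [Submodule.map_top, Submodule.range_subtype]
      rw [smul_eq_mul]
      exact (hS K hK).1
    rw [h1, Submodule.comap_map_mkQ, sup_eq_right.mpr hNle, Submodule.map_comap_subtype,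
      inf_of_le_right (hS K hK).2]
  have hmono : ∀ K L : Ideal R, K ≤ L → g K ≤ g L := by
    intro K L h x hx
    have hmm : Submodule.map N.mkQ (Submodule.comap I.subtype K)
        ≤ Submodule.map N.mkQ (Submodule.comap I.subtype L) :=
      Submodule.map_mono (Submodule.comap_mono h)
    exact hmm hx
  obtain ⟨_, ⟨M, hMS, rfl⟩, hmin⟩ :=
    IsArtinian.set_has_minimal (R := R ⧸ m) (M := I ⧸ N) (g '' S) (hne.image g)
  refine ⟨M, hMS, fun L hL hle => ?_⟩
  by_contra hne'
  have hlt : g L < g M := by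
    refine lt_of_le_of_ne (hmono _ _ hle) fun h => hne' ?_
    have := hrec L hL
    rw [h, hrec M hMS] at this
    exact this.symm
  exact hmin (g L) ⟨L, hL, rfl⟩ hlt

end Local

/-- In a Noetherian local ring every ideal admits a minimal reduction,
and any minimal reduction is basic. -/
theorem stmt17 {R : Type*} [CommRing R] [IsNoetherianRing R] [IsLocalRing R] (I : Ideal R) :
    (∃ J : Ideal R, IsMinimalReduction J I) ∧
    (∀ J : Ideal R, IsMinimalReduction J I → J.IsBasic) := by
  classical
  constructor
  · -- existence of a minimal reduction
    set m := IsLocalRing.maximalIdeal R with hm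
    set 𝒮 : Set (Ideal R) := {L | ∃ K, IsReduction K I ∧ L = K ⊔ m * I} with h𝒮
    have hIS : I ⊔ m * I ∈ 𝒮 := ⟨I, isReduction_self I, rfl⟩
    have hbound : ∀ L ∈ 𝒮, m * I ≤ L ∧ L ≤ I := by
      rintro L ⟨K, hK, rfl⟩
      exact ⟨le_sup_right, sup_le hK.1 Ideal.mul_le_right⟩
    obtain ⟨M₀, hM₀S, hM₀min⟩ :=
      exists_minimal_in_interval I 𝒮 ⟨_, hIS⟩ hbound
    obtain ⟨K₀, hK₀red, hM₀eq⟩ := hM₀S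
    have hM₀I : M₀ ≤ I := (hbound M₀ ⟨K₀, hK₀red, hM₀eq⟩).2
    have hM₀red : IsReduction M₀ I :=
      isReduction_of_le_of_le (hM₀eq ▸ (le_sup_left : K₀ ≤ K₀ ⊔ m * I)) hM₀I hK₀red
    -- choose a finset of minimal cardinality spanning `M₀` mod `m * I`
    have hPex : ∃ c : ℕ, ∃ T : Finset R, T.card = c ∧ (T : Set R) ⊆ (I : Set R) ∧
        Ideal.span T ⊔ m * I = M₀ := by
      obtain ⟨T₀, hT₀⟩ := (IsNoetherian.noetherian K₀ : K₀.FG)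
      rw [Ideal.submodule_span_eq] at hT₀
      exact ⟨T₀.card, T₀, rfl, fun x hx => hK₀red.1 (hT₀ ▸ Ideal.subset_span hx),
        by rw [hT₀, hM₀eq]⟩
    obtain ⟨S, hScard, hSsub, hSspan⟩ := Nat.find_spec hPex
    set K : Ideal R := Ideal.span S with hKdef
    have hKle : K ≤ I := Ideal.span_le.mpr hSsub
    have hKsup : K ⊔ m * I = M₀ := hSspan
    have hKred : IsReduction K I := by
      refine isReduction_of_sup_maximalIdeal_mul hKle ?_
      rw [← hm, hKsup]
      exact hM₀red
    -- the generators are independent mod `m * I`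
    have hindep : ∀ x ∈ S, x ∉ Ideal.span ((S.erase x : Finset R) : Set R) ⊔ m * I := by
      intro x hx hmem
      have herasesub : ((S.erase x : Finset R) : Set R) ⊆ (I : Set R) :=
        fun y hy => hSsub (Finset.erase_subset _ _ hy)
      have hspan' : Ideal.span ((S.erase x : Finset R) : Set R) ⊔ m * I = M₀ := by
        apply le_antisymm
        · rw [← hKsup]
          exact sup_le_sup_right
            (Ideal.span_mono (Finset.coe_subset.mpr (Finset.erase_subset _ _))) _
        · rw [← hKsup]
          refine sup_le ?_ le_sup_right
          rw [Ideal.span_le]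
          intro y hy
          by_cases hyx : y = x
          · subst hyx; exact hmem
          · exact Submodule.mem_sup_left
              (Ideal.subset_span (Finset.mem_erase.mpr ⟨hyx, hy⟩))
      have hlt : (S.erase x).card < Nat.find hPex := by
        rw [← hScard]
        exact Finset.card_erase_lt_of_mem hx
      exact Nat.find_min hPex hlt ⟨S.erase x, rfl, herasesub, hspan'⟩
    -- `K ⊓ m * I ≤ m * K`
    have hint : K ⊓ m * I ≤ m * K := by
      intro z hz
      have hzK : z ∈ Submodule.span R (S : Set R) := hz.1
      have hzmI : z ∈ m * I := hz.2
      obtain ⟨f, -, hfsum⟩ := Submodule.mem_span_finset.mp hzK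
      by_cases hall : ∀ y ∈ S, f y ∈ m
      · rw [← hfsum]
        refine Submodule.sum_mem _ fun y hy => ?_
        rw [smul_eq_mul]
        exact Ideal.mul_mem_mul (hall y hy) (Ideal.subset_span hy)
      · push_neg at hall
        obtain ⟨x₀, hx₀S, hx₀m⟩ := hall
        have hunit : IsUnit (f x₀) := by
          by_contra hnu
          exact hx₀m ((IsLocalRing.mem_maximalIdeal _).mpr hnu)
        exfalso
        apply hindep x₀ hx₀S
        have hsum : f x₀ * x₀ = z - ∑ y ∈ S.erase x₀, f y * y := by
          rw [← hfsum, ← Finset.sum_erase_add S _ hx₀S]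
          simp [smul_eq_mul]
        have hmem' : f x₀ * x₀ ∈ Ideal.span ((S.erase x₀ : Finset R) : Set R) ⊔ m * I := by
          rw [hsum]
          refine sub_mem (Submodule.mem_sup_right hzmI) ?_
          refine Submodule.mem_sup_left (Submodule.sum_mem _ fun y hy => ?_)
          exact Ideal.mul_mem_left _ _ (Ideal.subset_span hy)
        have hfin := Ideal.mul_mem_left _ (↑hunit.unit⁻¹ : R) hmem'
        rwa [← mul_assoc, IsUnit.val_inv_mul, one_mul] at hfin
    -- `K` is a minimal reduction
    refine ⟨K, hKred, fun L hL hLred => ?_⟩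
    have hLS : L ⊔ m * I ∈ 𝒮 := ⟨L, hLred, rfl⟩
    have hLsup : L ⊔ m * I = M₀ := by
      apply hM₀min _ hLS
      rw [← hKsup]
      exact sup_le_sup_right hL.le _
    have hKLsup : K ≤ L ⊔ m * K := by
      have h1 : K ≤ L ⊔ m * I := by rw [hLsup, ← hKsup]; exact le_sup_left
      have h2 : (L ⊔ m * I) ⊓ K = L ⊔ m * I ⊓ K :=
        sup_inf_assoc_of_le (m * I) hL.le
      calc K = L ⊔ m * I ⊓ K := by rw [← h2, inf_eq_right.mpr h1]
        _ ≤ L ⊔ m * K := sup_le_sup_left (le_trans (by rw [inf_comm]) hint) _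
    have hKL : K ≤ L := by
      have hfg : K.FG := IsNoetherian.noetherian K
      have hjac : m ≤ Ideal.jacobson ⊥ := IsLocalRing.maximalIdeal_le_jacobson ⊥
      refine Submodule.le_of_le_smul_of_le_jacobson_bot hfg hjac ?_
      rwa [smul_eq_mul]
    exact hL.ne (le_antisymm hL.le hKL)
  · -- any minimal reduction is basic
    intro J hJ J' hJ'
    by_contra hne
    exact hJ.2 J' (lt_of_le_of_ne hJ'.1 hne) (isReduction_trans hJ' hJ.1)
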